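/- arXiv:2405.07811 — 2 statements merged into one kernel-verified Lean document; each statement's English description precedes it below -/
import Mathlib

section
/- The diagonal Gram coefficients satisfy the asymptotics a_{m,m} ≈ (2πTm)^{−1/2} for large m; precisely, the sequence √(2πTm) · a_{m,m} tends to 1 as m → ∞. -/
open Real MeasureTheory Matrix Filter

/-- Physicists' Hermite polynomials: H_0 = 1, H_1 = 2x, H_{n+1} = 2x H_n - 2n H_{n-1}. -/
noncomputable def hermiteH : ℕ → ℝ → ℝ
  | 0, _ => 1
  | 1, x => 2 * x
  | (n + 2), x => 2 * x * hermiteH (n + 1) x - 2 * (n + 1) * hermiteH n x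

/-- Asymmetric Hermite basis function ψ_m. -/
noncomputable def psi (T : ℝ) (m : ℕ) (v : ℝ) : ℝ :=
  Real.exp (-v ^ 2 / T) * T ^ (-(1 : ℝ) / 2) *
    ((2 : ℝ) ^ m * (Nat.factorial m : ℝ) * Real.sqrt π) ^ (-(1 : ℝ) / 2) *
    hermiteH m (v / Real.sqrt T)

/-- Gram coefficient a_{m,n} = ∫ ψ_m ψ_n. -/
noncomputable def gramA (T : ℝ) (m n : ℕ) : ℝ := ∫ v : ℝ, psi T m v * psi T n v

/-! ### Auxiliary: polynomial version of the Hermite functions -/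

open Polynomial in
/-- Polynomial version of `hermiteH`. -/
noncomputable def Hp : ℕ → Polynomial ℝ
  | 0 => 1
  | 1 => C 2 * X
  | (n + 2) => C 2 * X * Hp (n + 1) - C (2 * ((n : ℝ) + 1)) * Hp n

open Polynomial in
lemma Hp_succ_succ (n : ℕ) :
    Hp (n + 2) = C 2 * X * Hp (n + 1) - C (2 * ((n : ℝ) + 1)) * Hp n := rfl

open Polynomial in
lemma Hp_eval : ∀ (n : ℕ) (x : ℝ), (Hp n).eval x = hermiteH n x := by
  intro n
  induction n using Nat.strong_induction_on with
  | _ n ih =>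
    match n with
    | 0 => intro x; simp [Hp, hermiteH]
    | 1 => intro x; simp [Hp, hermiteH]
    | (n+2) =>
      intro x
      have h1 := ih (n+1) (by omega) x
      have h2 := ih n (by omega) x
      simp only [Hp, hermiteH, eval_sub, eval_mul, eval_ofNat, eval_C, eval_X, h1, h2]

open Polynomial in
lemma Hp_deriv_aux : ∀ n : ℕ, derivative (Hp (n + 1)) = C (2 * ((n : ℝ) + 1)) * Hp n ∧
    derivative (Hp (n + 2)) = C (2 * ((n : ℝ) + 2)) * Hp (n + 1) := by
  intro n
  induction n with
  | zero =>
    constructor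
    · show derivative (C 2 * X : Polynomial ℝ) = _
      simp [Hp]
    · rw [Hp_succ_succ 0]
      simp [Hp, map_ofNat]
      ring
  | succ n ih =>
    obtain ⟨h1, h2⟩ := ih
    have e : n + 1 + 1 = n + 2 := rfl
    constructor
    · rw [e, h2]; push_cast; ring_nf
    · rw [show n + 1 + 2 = n + 3 from rfl, Hp_succ_succ (n+1)]
      simp only [derivative_sub, derivative_mul, derivative_C_mul, derivative_C,
        derivative_X, e]
      rw [h1, h2, Hp_succ_succ n]
      push_cast
      simp only [C_add, C_mul, _root_.map_ofNat, C_1]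
      ring

open Polynomial in
lemma Hp_deriv (n : ℕ) : derivative (Hp (n + 1)) = C (2 * ((n : ℝ) + 1)) * Hp n :=
  (Hp_deriv_aux n).1

/-! ### Auxiliary: integrability and decay of polynomial × Gaussian -/

lemma abs_pow_mul_exp_le (n : ℕ) (x : ℝ) :
    |x| ^ n * Real.exp (-x ^ 2) ≤ (Nat.factorial n : ℝ) + 1 := by
  have hf : (1 : ℝ) ≤ Nat.factorial n := by exact_mod_cast (Nat.factorial_pos n)
  rcases le_total (|x|) 1 with h | h
  · have h1 : |x| ^ n ≤ 1 := pow_le_one₀ (abs_nonneg x) h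
    have h2 : Real.exp (-x ^ 2) ≤ 1 := Real.exp_le_one_iff.mpr (by nlinarith [sq_nonneg x])
    nlinarith [mul_nonneg (pow_nonneg (abs_nonneg x) n) (Real.exp_pos (-x ^ 2)).le,
      (Real.exp_pos (-x ^ 2)).le]
  · have h1 : |x| ^ n ≤ (x ^ 2) ^ n := by
      rw [← sq_abs]
      exact pow_le_pow_left₀ (abs_nonneg x) (le_self_pow₀ h two_ne_zero) n
    have h2 : ((x ^ 2) ^ n : ℝ) ≤ (Nat.factorial n : ℝ) * Real.exp (x ^ 2) := by
      have h3 := Real.pow_div_factorial_le_exp (x ^ 2) (sq_nonneg x) n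
      rw [div_le_iff₀ (by positivity)] at h3
      nlinarith [Real.exp_pos (x ^ 2)]
    calc |x| ^ n * Real.exp (-x ^ 2) ≤ (x ^ 2) ^ n * Real.exp (-x ^ 2) :=
          mul_le_mul_of_nonneg_right h1 (Real.exp_pos _).le
      _ ≤ ((Nat.factorial n : ℝ) * Real.exp (x ^ 2)) * Real.exp (-x ^ 2) :=
          mul_le_mul_of_nonneg_right h2 (Real.exp_pos _).le
      _ = (Nat.factorial n : ℝ) := by rw [mul_assoc, ← Real.exp_add]; simp
      _ ≤ (Nat.factorial n : ℝ) + 1 := by linarith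

lemma integrable_pow_gauss (n : ℕ) :
    Integrable fun x : ℝ => x ^ n * Real.exp (-2 * x ^ 2) := by
  have h1 : Integrable fun x : ℝ => Real.exp (-(1:ℝ) * x ^ 2) := integrable_exp_neg_mul_sq one_pos
  have h2 : Integrable fun x : ℝ =>
      (x ^ n * Real.exp (-(1:ℝ) * x ^ 2)) * Real.exp (-(1:ℝ) * x ^ 2) := by
    refine h1.bdd_mul (c := (Nat.factorial n : ℝ) + 1) ?_ (Filter.Eventually.of_forall fun x => ?_)
    · exact ((continuous_pow n).mul
        ((continuous_const.mul (continuous_pow 2)).rexp)).aestronglyMeasurable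
    · rw [norm_mul, norm_pow, Real.norm_eq_abs, Real.norm_eq_abs,
        abs_of_nonneg (Real.exp_pos _).le]
      simpa using abs_pow_mul_exp_le n x
  refine h2.congr (Filter.Eventually.of_forall fun x => ?_)
  show x ^ n * rexp (-1 * x ^ 2) * rexp (-1 * x ^ 2) = x ^ n * rexp (-2 * x ^ 2)
  rw [mul_assoc, ← Real.exp_add]
  ring_nf

open Polynomial in
lemma integrable_poly_gauss (p : Polynomial ℝ) :
    Integrable fun x : ℝ => p.eval x * Real.exp (-2 * x ^ 2) := by
  induction p using Polynomial.induction_on' with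
  | add p q hp hq => simpa [add_mul, Pi.add_def] using hp.add hq
  | monomial k a =>
      simpa [Polynomial.eval_monomial, mul_assoc] using (integrable_pow_gauss k).const_mul a

lemma tendsto_pow_gauss_atTop (n : ℕ) :
    Tendsto (fun x : ℝ => x ^ n * Real.exp (-2 * x ^ 2)) atTop (nhds 0) := by
  have hg : Tendsto (fun x : ℝ => Real.exp (-(1 / 2) * x)) atTop (nhds 0) := by
    have h2 : Tendsto (fun x : ℝ => (1 / 2 : ℝ) * x) atTop atTop :=
      Tendsto.const_mul_atTop one_half_pos tendsto_id
    have h3 := Real.tendsto_exp_neg_atTop_nhds_zero.comp h2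
    refine h3.congr fun x => ?_
    simp [Function.comp, neg_mul]
  have h := (rpow_mul_exp_neg_mul_sq_isLittleO_exp_neg two_pos (n : ℝ)).tendsto_zero_of_tendsto hg
  simpa [Real.rpow_natCast] using h

open Polynomial in
lemma tendsto_poly_gauss_atTop (p : Polynomial ℝ) :
    Tendsto (fun x : ℝ => p.eval x * Real.exp (-2 * x ^ 2)) atTop (nhds 0) := by
  induction p using Polynomial.induction_on' with
  | add p q hp hq => simpa [add_mul] using hp.add hq
  | monomial k a =>
      simpa [Polynomial.eval_monomial, mul_assoc] using (tendsto_pow_gauss_atTop k).const_mul a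

open Polynomial in
lemma tendsto_poly_gauss_atBot (p : Polynomial ℝ) :
    Tendsto (fun x : ℝ => p.eval x * Real.exp (-2 * x ^ 2)) atBot (nhds 0) := by
  have h := (tendsto_poly_gauss_atTop (p.comp (-X))).comp tendsto_neg_atBot_atTop
  refine h.congr fun x => ?_
  simp [Function.comp, Polynomial.eval_comp, neg_sq]

/-! ### The Gaussian pairing functional -/

open Polynomial in
/-- `GInt p = ∫ p(x) e^{-2x²} dx`. -/
noncomputable def GInt (p : Polynomial ℝ) : ℝ := ∫ x : ℝ, p.eval x * Real.exp (-2 * x ^ 2)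

open Polynomial in
lemma GInt_add (p q : Polynomial ℝ) : GInt (p + q) = GInt p + GInt q := by
  unfold GInt
  rw [← integral_add (integrable_poly_gauss p) (integrable_poly_gauss q)]
  simp [add_mul]

open Polynomial in
lemma GInt_C_mul (c : ℝ) (p : Polynomial ℝ) : GInt (C c * p) = c * GInt p := by
  unfold GInt
  rw [← integral_const_mul]
  simp [mul_assoc]

open Polynomial in
lemma GInt_sub (p q : Polynomial ℝ) : GInt (p - q) = GInt p - GInt q := by
  have := GInt_add (p - q) q
  simp at this
  linarith

open Polynomial in
lemma GInt_zero : GInt 0 = 0 := by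
  have := GInt_sub 1 1
  simpa using this

open Polynomial in
lemma GInt_key (p : Polynomial ℝ) : GInt (derivative p) = 4 * GInt (X * p) := by
  set q : Polynomial ℝ := derivative p - C 4 * (X * p) with hq
  have hqe : ∀ x : ℝ, q.eval x = (derivative p).eval x - 4 * x * p.eval x := by
    intro x; simp [hq]; ring
  have hder : ∀ x : ℝ, HasDerivAt (fun y => p.eval y * Real.exp (-2 * y ^ 2))
      (q.eval x * Real.exp (-2 * x ^ 2)) x := by
    intro x
    have h1 : HasDerivAt (fun y : ℝ => Real.exp (-2 * y ^ 2))
        (Real.exp (-2 * x ^ 2) * (-2 * (2 * x))) x := by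
      have h0 : HasDerivAt (fun y : ℝ => -2 * y ^ 2) (-2 * (2 * x)) x := by
        simpa using (hasDerivAt_pow 2 x).const_mul (-2 : ℝ)
      exact h0.exp
    have h2 := (p.hasDerivAt x).mul h1
    refine h2.congr_deriv ?_
    rw [hqe]; ring
  have hint := integrable_poly_gauss q
  have h1 : ∫ x in Set.Ioi (0:ℝ), q.eval x * Real.exp (-2 * x ^ 2)
      = 0 - p.eval 0 * Real.exp (-2 * (0:ℝ) ^ 2) :=
    integral_Ioi_of_hasDerivAt_of_tendsto' (fun x _ => hder x) hint.integrableOn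
      (tendsto_poly_gauss_atTop p)
  have h2 : ∫ x in Set.Iic (0:ℝ), q.eval x * Real.exp (-2 * x ^ 2)
      = p.eval 0 * Real.exp (-2 * (0:ℝ) ^ 2) - 0 :=
    integral_Iic_of_hasDerivAt_of_tendsto' (fun x _ => hder x) hint.integrableOn
      (tendsto_poly_gauss_atBot p)
  have h3 := intervalIntegral.integral_Iic_add_Ioi (b := (0:ℝ)) hint.integrableOn hint.integrableOn
  have h4 : GInt q = 0 := by
    unfold GInt
    rw [← h3, h1, h2]; ring
  rw [hq, GInt_sub, GInt_C_mul] at h4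
  linarith

open Polynomial in
lemma GInt_X_mul (p : Polynomial ℝ) : GInt (X * p) = (1 / 4) * GInt (derivative p) := by
  rw [GInt_key]; ring

lemma GInt_one : GInt 1 = Real.sqrt (π / 2) := by
  unfold GInt
  simp only [Polynomial.eval_one, one_mul]
  exact integral_gaussian 2

/-- The double factorial sequence `(2m-1)!!`. -/
noncomputable def df : ℕ → ℝ
  | 0 => 1
  | (m + 1) => (2 * m + 1) * df m

open Polynomial in
/-- The main recursion: G(H_{m+2} r) = (1/2) G(H_{m+1} r') - (m+1) G(H_m r). -/
lemma GInt_rec (m : ℕ) (r : Polynomial ℝ) :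
    GInt (Hp (m + 2) * r) = (1 / 2) * GInt (Hp (m + 1) * derivative r)
      - ((m : ℝ) + 1) * GInt (Hp m * r) := by
  have e1 : Hp (m + 2) * r
      = C 2 * (X * (Hp (m + 1) * r)) - C (2 * ((m : ℝ) + 1)) * (Hp m * r) := by
    rw [Hp_succ_succ]; ring
  rw [e1, GInt_sub, GInt_C_mul, GInt_C_mul, GInt_X_mul]
  have e2 : derivative (Hp (m + 1) * r)
      = C (2 * ((m : ℝ) + 1)) * (Hp m * r) + Hp (m + 1) * derivative r := by
    rw [derivative_mul, Hp_deriv]; ring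
  rw [e2, GInt_add, GInt_C_mul]
  ring

open Polynomial in
lemma main_ind (m : ℕ) :
    GInt (Hp m * Hp m) = df m * GInt 1 ∧
    GInt (Hp (m + 1) * Hp (m + 1)) = df (m + 1) * GInt 1 ∧
    GInt (Hp (m + 2) * Hp m) = -(df (m + 1) * GInt 1) := by
  induction m with
  | zero =>
    have hX2 : GInt (X * X) = (1 / 4) * GInt 1 := by
      rw [GInt_X_mul, derivative_X]
    have hI1 : GInt (Hp 1 * Hp 1) = GInt 1 := by
      have e : Hp 1 * Hp 1 = C 4 * (X * X) := by
        show (C 2 * X : Polynomial ℝ) * (C 2 * X) = C 4 * (X * X)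
        have h4 : (C 4 : Polynomial ℝ) = C 2 * C 2 := by
          rw [← C_mul]; norm_num
        rw [h4]; ring
      rw [e, GInt_C_mul, hX2]; ring
    refine ⟨by simp [Hp, df], by simpa [df] using hI1, ?_⟩
    have h := GInt_rec 0 (Hp 0)
    rw [show Hp 0 = 1 from rfl] at h
    simp only [derivative_one, mul_zero, GInt_zero, mul_one, one_mul] at h
    rw [show Hp 0 = 1 from rfl]
    simp only [mul_one]
    rw [h]
    simp [df]
  | succ m ih =>
    obtain ⟨h1, h2, h3⟩ := ih
    have e21 : (m : ℝ) + 1 + 1 = (m : ℝ) + 2 := by ring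
    have hI : GInt (Hp (m + 2) * Hp (m + 2)) = df (m + 2) * GInt 1 := by
      have h := GInt_rec m (Hp (m + 2))
      rw [Hp_deriv (m + 1)] at h
      push_cast at h
      have e : Hp (m + 1) * (C (2 * ((m : ℝ) + 1 + 1)) * Hp (m + 1))
          = C (2 * ((m : ℝ) + 2)) * (Hp (m + 1) * Hp (m + 1)) := by rw [e21]; ring
      rw [e, GInt_C_mul, h2] at h
      have e' : Hp m * Hp (m + 2) = Hp (m + 2) * Hp m := mul_comm _ _
      rw [e', h3] at h
      rw [h]
      show _ = df ((m + 1) + 1) * GInt 1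
      simp only [df]
      push_cast
      ring
    refine ⟨h2, hI, ?_⟩
    have h := GInt_rec (m + 1) (Hp (m + 1))
    rw [Hp_deriv m] at h
    have e : Hp (m + 2) * (C (2 * ((m : ℝ) + 1)) * Hp m)
        = C (2 * ((m : ℝ) + 1)) * (Hp (m + 2) * Hp m) := by ring
    rw [e, GInt_C_mul, h3, h2] at h
    rw [show m + 1 + 2 = m + 3 from rfl] at h
    rw [show (m + 1) + 2 = m + 3 from rfl, h]
    show _ = -(df ((m + 1) + 1) * GInt 1)
    simp only [df]
    push_cast
    ring

lemma df_eq (m : ℕ) : df m = (Nat.factorial (2 * m) : ℝ) / (2 ^ m * Nat.factorial m) := by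
  induction m with
  | zero => simp [df]
  | succ m ih =>
    have h2 : 2 * (m + 1) = (2 * m + 1) + 1 := by ring
    show (2 * (m : ℝ) + 1) * df m = _
    rw [ih, h2, Nat.factorial_succ, Nat.factorial_succ, Nat.factorial_succ]
    have hm : (Nat.factorial m : ℝ) ≠ 0 := by
      exact_mod_cast (Nat.factorial_pos m).ne'
    have h2m : (2 : ℝ) ^ m ≠ 0 := by positivity
    push_cast
    field_simp
    ring

lemma stirling_limit :
    Tendsto (fun m : ℕ => Real.sqrt (π * m) * (Nat.factorial (2 * m) : ℝ)
      / (4 ^ m * (Nat.factorial m : ℝ) ^ 2)) atTop (nhds 1) := by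
  have hs := Stirling.tendsto_stirlingSeq_sqrt_pi
  have h2 : Tendsto (fun m : ℕ => 2 * m) atTop atTop := by
    apply tendsto_atTop_atTop_of_monotone (fun a b h => by omega)
    intro b; exact ⟨b, by omega⟩
  have hcomp : Tendsto (fun m : ℕ => Stirling.stirlingSeq (2 * m)) atTop
      (nhds (Real.sqrt π)) := hs.comp h2
  have hπ : (0 : ℝ) < Real.sqrt π := Real.sqrt_pos.mpr pi_pos
  have hlim : Tendsto (fun m : ℕ => Real.sqrt π * (Stirling.stirlingSeq (2 * m)
      / (Stirling.stirlingSeq m) ^ 2)) atTop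
      (nhds (Real.sqrt π * (Real.sqrt π / (Real.sqrt π) ^ 2))) :=
    tendsto_const_nhds.mul (hcomp.div (hs.pow 2) (by positivity))
  have hval : Real.sqrt π * (Real.sqrt π / (Real.sqrt π) ^ 2) = 1 := by
    rw [sq]
    field_simp
  rw [hval] at hlim
  refine hlim.congr' ?_
  filter_upwards [eventually_ge_atTop 1] with m hm
  have hm0 : (0 : ℝ) < m := by exact_mod_cast hm
  have hsm : (0 : ℝ) < Real.sqrt m := Real.sqrt_pos.mpr hm0
  have he : (0 : ℝ) < Real.exp 1 := Real.exp_pos 1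
  unfold Stirling.stirlingSeq
  push_cast
  have h4m : Real.sqrt (2 * (2 * (m : ℝ))) = 2 * Real.sqrt m := by
    rw [show 2 * (2 * (m : ℝ)) = 2 ^ 2 * m by ring,
      Real.sqrt_mul (by positivity : (0:ℝ) ≤ 2 ^ 2),
      Real.sqrt_sq (by norm_num : (0:ℝ) ≤ 2)]
  have hπm : Real.sqrt (π * m) = Real.sqrt π * Real.sqrt m := Real.sqrt_mul pi_pos.le _
  have hpow : ((2 * (m : ℝ)) / Real.exp 1) ^ (2 * m)
      = 4 ^ m * ((m : ℝ) / Real.exp 1) ^ (2 * m) := by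
    rw [show (2 * (m : ℝ)) / Real.exp 1 = 2 * ((m : ℝ) / Real.exp 1) by ring, mul_pow,
      pow_mul]
    norm_num
  have hpow2 : ((m : ℝ) / Real.exp 1) ^ (2 * m) = (((m : ℝ) / Real.exp 1) ^ m) ^ 2 := by
    rw [mul_comm 2 m, pow_mul]
  have hme : (0:ℝ) < (m : ℝ) / Real.exp 1 := by positivity
  have hfm : (0:ℝ) < (Nat.factorial m : ℝ) := by exact_mod_cast Nat.factorial_pos m
  rw [hpow, hpow2, hπm, div_pow]
  rw [h4m]
  field_simp
  ring_nf
  rw [Real.sq_sqrt hm0.le, Real.sq_sqrt (by positivity : (0:ℝ) ≤ (m:ℝ) * 2)]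

open Polynomial in
lemma gramA_eq (T : ℝ) (hT : 0 < T) (m : ℕ) :
    gramA T m m = T⁻¹ * ((2 ^ m * (Nat.factorial m : ℝ) * Real.sqrt π)⁻¹) *
      (Real.sqrt T * (df m * Real.sqrt (π / 2))) := by
  have hπ : (0 : ℝ) < Real.sqrt π := Real.sqrt_pos.mpr pi_pos
  have hA : (0:ℝ) < 2 ^ m * (Nat.factorial m : ℝ) * Real.sqrt π := by
    have := Nat.factorial_pos m
    positivity
  have hsT : (0:ℝ) < Real.sqrt T := Real.sqrt_pos.mpr hT
  have hpt : ∀ v : ℝ, psi T m v * psi T m v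
      = (T⁻¹ * (2 ^ m * (Nat.factorial m : ℝ) * Real.sqrt π)⁻¹) *
        ((Hp m * Hp m).eval (v * (Real.sqrt T)⁻¹) *
          Real.exp (-2 * (v * (Real.sqrt T)⁻¹) ^ 2)) := by
    intro v
    have e2 : Real.exp (-v ^ 2 / T) * Real.exp (-v ^ 2 / T)
        = Real.exp (-2 * (v * (Real.sqrt T)⁻¹) ^ 2) := by
      rw [← Real.exp_add]
      congr 1
      rw [mul_pow, inv_pow, Real.sq_sqrt hT.le]
      field_simp
      ring
    have e3 : T ^ (-(1:ℝ)/2) * T ^ (-(1:ℝ)/2) = T⁻¹ := by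
      rw [← Real.rpow_add hT, show (-(1:ℝ)/2 + -(1:ℝ)/2) = -1 by norm_num,
        Real.rpow_neg_one]
    have e4 : ((2:ℝ) ^ m * (Nat.factorial m : ℝ) * Real.sqrt π) ^ (-(1:ℝ)/2) *
        ((2:ℝ) ^ m * (Nat.factorial m : ℝ) * Real.sqrt π) ^ (-(1:ℝ)/2)
        = ((2:ℝ) ^ m * (Nat.factorial m : ℝ) * Real.sqrt π)⁻¹ := by
      rw [← Real.rpow_add hA, show (-(1:ℝ)/2 + -(1:ℝ)/2) = -1 by norm_num,
        Real.rpow_neg_one]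
    have e5 : (Hp m * Hp m).eval (v * (Real.sqrt T)⁻¹)
        = hermiteH m (v / Real.sqrt T) * hermiteH m (v / Real.sqrt T) := by
      rw [eval_mul, Hp_eval, div_eq_mul_inv]
    rw [e5]
    unfold psi
    rw [← e2, ← e3, ← e4]
    ring
  unfold gramA
  simp_rw [hpt]
  rw [integral_const_mul]
  have hcv := MeasureTheory.Measure.integral_comp_mul_right
    (fun x => (Hp m * Hp m).eval x * Real.exp (-2 * x ^ 2)) ((Real.sqrt T)⁻¹)
  rw [hcv, inv_inv, abs_of_pos hsT, smul_eq_mul]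
  have hG : (∫ x : ℝ, (Hp m * Hp m).eval x * Real.exp (-2 * x ^ 2))
      = df m * Real.sqrt (π / 2) := by
    rw [show (∫ x : ℝ, (Hp m * Hp m).eval x * Real.exp (-2 * x ^ 2)) = GInt (Hp m * Hp m)
      from rfl, (main_ind m).1, GInt_one]
  rw [hG]

theorem gramA_diag_asymptotics (T : ℝ) (hT : 0 < T) :
    Filter.Tendsto (fun m : ℕ => Real.sqrt (2 * π * T * (m : ℝ)) * gramA T m m)
      Filter.atTop (nhds 1) := by
  have hπ : (0 : ℝ) < Real.sqrt π := Real.sqrt_pos.mpr pi_pos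
  have hsT : (0:ℝ) < Real.sqrt T := Real.sqrt_pos.mpr hT
  have key : ∀ m : ℕ, Real.sqrt (2 * π * T * (m : ℝ)) * gramA T m m
      = Real.sqrt (π * m) * (Nat.factorial (2 * m) : ℝ)
        / (4 ^ m * (Nat.factorial m : ℝ) ^ 2) := by
    intro m
    rw [gramA_eq T hT m, df_eq m]
    have hfm : (0:ℝ) < (Nat.factorial m : ℝ) := by exact_mod_cast Nat.factorial_pos m
    have h1 : Real.sqrt (2 * π * T * (m : ℝ)) = Real.sqrt (2 * π * m) * Real.sqrt T := by
      rw [← Real.sqrt_mul (by positivity : (0:ℝ) ≤ 2 * π * (m:ℝ)) T]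
      ring_nf
    have h2 : Real.sqrt (2 * π * m) * Real.sqrt (π / 2) = π * Real.sqrt m := by
      rw [← Real.sqrt_mul (by positivity : (0:ℝ) ≤ 2 * π * (m:ℝ))]
      rw [show 2 * π * (m:ℝ) * (π / 2) = π ^ 2 * m by ring,
        Real.sqrt_mul (sq_nonneg π), Real.sqrt_sq pi_pos.le]
    have h3 : Real.sqrt (π * m) = Real.sqrt π * Real.sqrt m := Real.sqrt_mul pi_pos.le _
    have h4 : Real.sqrt T * Real.sqrt T = T := Real.mul_self_sqrt hT.le
    have h5 : Real.sqrt π * Real.sqrt π = π := Real.mul_self_sqrt pi_pos.le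
    have h6 : (4:ℝ) ^ m = 2 ^ m * 2 ^ m := by
      rw [show (4:ℝ) = 2 * 2 by norm_num, mul_pow]
    rw [h1, h3, h6]
    rw [show Real.sqrt (2 * π * ↑m) * Real.sqrt T *
        (T⁻¹ * ((2 ^ m * (Nat.factorial m : ℝ) * Real.sqrt π)⁻¹) *
        (Real.sqrt T * ((Nat.factorial (2 * m) : ℝ) / (2 ^ m * Nat.factorial m) *
          Real.sqrt (π / 2))))
      = (Real.sqrt T * Real.sqrt T) * T⁻¹ * (Real.sqrt (2 * π * ↑m) * Real.sqrt (π / 2)) *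
        ((2 ^ m * (Nat.factorial m : ℝ) * Real.sqrt π)⁻¹ *
          ((Nat.factorial (2 * m) : ℝ) / (2 ^ m * Nat.factorial m))) from by ring]
    rw [h4, h2]
    rw [mul_inv_cancel₀ hT.ne']
    field_simp
    linear_combination (-(Real.sqrt m)) * h5
  refine Tendsto.congr (fun m => (key m).symm) stirling_limit
end

section
/- Let N ∈ ℕ, e ∈ ℝ, and let M be the (N+1)×(N+1) real matrix whose entries are M_{m,n} = (A^N · D^N)_{m,n} − e·√(2(N+1)/T) · a_{m, N+1} when n = N, and M_{m,n} = (A^N · D^N)_{m,n} otherwise. Then M is skew-symmetric: M + Mᵀ = 0. (This expresses that the first modified matrix D̄^N = D^N + (A^N)^{−1}·A₁₂^N·D₂₁^N is skew-symmetric with respect to the truncated Gram matrix: A^N·D̄^N + (D̄^N)ᵀ·A^N = 0.) -/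
open Real MeasureTheory Matrix Filter

/-- Truncated transport matrix D^N. -/
noncomputable def Dmat (T : ℝ) (e : ℝ) (N : ℕ) : Matrix (Fin (N + 1)) (Fin (N + 1)) ℝ :=
  fun m n => if (n : ℕ) + 1 = (m : ℕ) then -e * Real.sqrt (2 * (m : ℝ) / T) else 0

/-- Truncated Gram matrix A^N. -/
noncomputable def Amat (T : ℝ) (N : ℕ) : Matrix (Fin (N + 1)) (Fin (N + 1)) ℝ :=
  fun m n => gramA T (m : ℕ) (n : ℕ)

open Topology


lemma hermiteH_succ (n : ℕ) (x : ℝ) :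
    hermiteH (n + 1) x = 2 * x * hermiteH n x - 2 * (n : ℝ) * hermiteH (n - 1) x := by
  cases n with
  | zero => simp [hermiteH]
  | succ k => simp [hermiteH]

lemma hermiteH_hasDerivAt : ∀ (m : ℕ) (x : ℝ),
    HasDerivAt (fun y => hermiteH m y) (2 * (m : ℝ) * hermiteH (m - 1) x) x
  | 0, x => by simpa [hermiteH] using hasDerivAt_const x (1 : ℝ)
  | 1, x => by
      have h := (hasDerivAt_id x).const_mul (2 : ℝ)
      simpa [hermiteH] using h
  | (n + 2), x => by
      have h1 := hermiteH_hasDerivAt (n + 1) x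
      have h0 := hermiteH_hasDerivAt n x
      have hx : HasDerivAt (fun y : ℝ => 2 * y) 2 x := by
        simpa using (hasDerivAt_id x).const_mul (2 : ℝ)
      have key := (hx.mul h1).sub (h0.const_mul (2 * ((n : ℝ) + 1)))
      have funeq : (fun y => hermiteH (n + 2) y) =
          fun y => 2 * y * hermiteH (n + 1) y - 2 * ((n : ℝ) + 1) * hermiteH n y := by
        funext y; simp [hermiteH]
      rw [funeq]
      refine key.congr_deriv ?_
      symm
      simp only [show (n + 2 - 1 : ℕ) = n + 1 from rfl, show (n + 1 - 1 : ℕ) = n from rfl]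
      rw [hermiteH_succ n]
      push_cast
      ring

lemma hermiteH_poly : ∀ m : ℕ, ∃ p : Polynomial ℝ, ∀ x, hermiteH m x = p.eval x
  | 0 => ⟨1, fun x => by simp [hermiteH]⟩
  | 1 => ⟨2 * Polynomial.X, fun x => by simp [hermiteH]⟩
  | (n + 2) => by
      obtain ⟨p, hp⟩ := hermiteH_poly (n + 1)
      obtain ⟨q, hq⟩ := hermiteH_poly n
      exact ⟨2 * Polynomial.X * p - Polynomial.C (2 * ((n : ℝ) + 1)) * q,
        fun x => by simp [hermiteH, hp, hq]⟩

lemma gauss_poly_integrable {b : ℝ} (hb : 0 < b) (p : Polynomial ℝ) :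
    Integrable fun v : ℝ => Real.exp (-b * v ^ 2) * p.eval v := by
  induction p using Polynomial.induction_on' with
  | add p q hp hq => simpa [mul_add, Pi.add_def] using hp.add hq
  | monomial i c =>
      have h : Integrable fun v : ℝ => v ^ (i : ℝ) * Real.exp (-b * v ^ 2) :=
        integrable_rpow_mul_exp_neg_mul_sq hb
          (lt_of_lt_of_le neg_one_lt_zero (Nat.cast_nonneg i))
      have h' : Integrable fun v : ℝ => v ^ i * Real.exp (-b * v ^ 2) := by
        simpa [Real.rpow_natCast] using h
      exact (h'.const_mul c).congr (Filter.Eventually.of_forall fun v => by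
        simp [Polynomial.eval_monomial]; ring)

lemma pow_gauss_tendsto_atTop {b : ℝ} (hb : 0 < b) (i : ℕ) :
    Tendsto (fun v : ℝ => |v| ^ i * Real.exp (-b * v ^ 2)) atTop (𝓝 0) := by
  have h1 : Tendsto (fun x : ℝ => x ^ i * Real.exp (-x)) atTop (𝓝 0) :=
    tendsto_pow_mul_exp_neg_atTop_nhds_zero i
  have h2 : Tendsto (fun v : ℝ => b * v ^ 2) atTop atTop :=
    (tendsto_pow_atTop two_ne_zero).const_mul_atTop hb
  have h4 := (h1.comp h2).const_mul ((b ^ i)⁻¹)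
  rw [mul_zero] at h4
  apply squeeze_zero' (Filter.Eventually.of_forall fun v => by positivity) _ h4
  filter_upwards [eventually_ge_atTop (1 : ℝ)] with v hv
  have hv0 : (0 : ℝ) ≤ v := by linarith
  have hle : |v| ^ i ≤ (b ^ i)⁻¹ * (b * v ^ 2) ^ i := by
    rw [abs_of_nonneg hv0, mul_pow, ← mul_assoc, inv_mul_cancel₀ (by positivity), one_mul]
    exact pow_le_pow_left₀ hv0 (by nlinarith) i
  have : |v| ^ i * Real.exp (-b * v ^ 2) ≤
      (b ^ i)⁻¹ * (b * v ^ 2) ^ i * Real.exp (-b * v ^ 2) :=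
    mul_le_mul_of_nonneg_right hle (Real.exp_pos _).le
  simpa [Function.comp, mul_assoc, neg_mul] using this

lemma poly_gauss_tendsto_atTop {b : ℝ} (hb : 0 < b) (p : Polynomial ℝ) :
    Tendsto (fun v : ℝ => Real.exp (-b * v ^ 2) * p.eval v) atTop (𝓝 0) := by
  have heq : (fun v : ℝ => Real.exp (-b * v ^ 2) * p.eval v) =
      fun v => ∑ i ∈ Finset.range (p.natDegree + 1),
        p.coeff i * v ^ i * Real.exp (-b * v ^ 2) := by
    funext v
    rw [mul_comm, Polynomial.eval_eq_sum_range, Finset.sum_mul]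
  rw [heq]
  have h0 : Tendsto (fun v : ℝ =>
      ∑ i ∈ Finset.range (p.natDegree + 1),
        p.coeff i * v ^ i * Real.exp (-b * v ^ 2)) atTop (𝓝 (∑ i ∈ Finset.range (p.natDegree + 1), 0)) := by
    apply tendsto_finset_sum
    intro i _
    refine squeeze_zero_norm (fun v => ?_)
      (by simpa using (pow_gauss_tendsto_atTop hb i).const_mul |p.coeff i|)
    simp [abs_mul, abs_pow, abs_of_pos (Real.exp_pos _), mul_assoc]
  simpa using h0

lemma poly_gauss_tendsto_atBot {b : ℝ} (hb : 0 < b) (p : Polynomial ℝ) :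
    Tendsto (fun v : ℝ => Real.exp (-b * v ^ 2) * p.eval v) atBot (𝓝 0) := by
  have h := (poly_gauss_tendsto_atTop hb (p.comp (-Polynomial.X))).comp tendsto_neg_atBot_atTop
  apply h.congr
  intro v
  simp [Function.comp, Polynomial.eval_comp, neg_mul]

section Core

variable {T : ℝ}

lemma HH_poly (hT : 0 < T) (m n : ℕ) : ∃ p : Polynomial ℝ,
    ∀ v : ℝ, hermiteH m (v / Real.sqrt T) * hermiteH n (v / Real.sqrt T) = p.eval v := by
  obtain ⟨p, hp⟩ := hermiteH_poly m
  obtain ⟨q, hq⟩ := hermiteH_poly n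
  refine ⟨(p * q).comp (Polynomial.C (Real.sqrt T)⁻¹ * Polynomial.X), fun v => ?_⟩
  have : v / Real.sqrt T = (Real.sqrt T)⁻¹ * v := by rw [div_eq_mul_inv, mul_comm]
  simp [Polynomial.eval_comp, hp, hq, this]

lemma F_integrable (hT : 0 < T) (m n : ℕ) :
    Integrable fun v : ℝ =>
      Real.exp (-(2 / T) * v ^ 2) * (hermiteH m (v / Real.sqrt T) * hermiteH n (v / Real.sqrt T)) := by
  obtain ⟨p, hp⟩ := HH_poly hT m n
  exact (gauss_poly_integrable (by positivity : (0:ℝ) < 2 / T) p).congr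
    (Filter.Eventually.of_forall fun v => by simp only [hp])

lemma F_tendsto_atTop (hT : 0 < T) (m n : ℕ) :
    Tendsto (fun v : ℝ =>
      Real.exp (-(2 / T) * v ^ 2) * (hermiteH m (v / Real.sqrt T) * hermiteH n (v / Real.sqrt T)))
      atTop (𝓝 0) := by
  obtain ⟨p, hp⟩ := HH_poly hT m n
  exact (poly_gauss_tendsto_atTop (by positivity : (0:ℝ) < 2 / T) p).congr
    (fun v => by simp only [hp])

lemma F_tendsto_atBot (hT : 0 < T) (m n : ℕ) :
    Tendsto (fun v : ℝ =>
      Real.exp (-(2 / T) * v ^ 2) * (hermiteH m (v / Real.sqrt T) * hermiteH n (v / Real.sqrt T)))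
      atBot (𝓝 0) := by
  obtain ⟨p, hp⟩ := HH_poly hT m n
  exact (poly_gauss_tendsto_atBot (by positivity : (0:ℝ) < 2 / T) p).congr
    (fun v => by simp only [hp])

lemma F_hasDerivAt (hT : 0 < T) (m n : ℕ) (v : ℝ) :
    HasDerivAt (fun w : ℝ =>
        Real.exp (-(2 / T) * w ^ 2) * (hermiteH m (w / Real.sqrt T) * hermiteH n (w / Real.sqrt T)))
      (-(Real.sqrt T)⁻¹ * (Real.exp (-(2 / T) * v ^ 2) *
        (hermiteH (m + 1) (v / Real.sqrt T) * hermiteH n (v / Real.sqrt T) +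
          hermiteH m (v / Real.sqrt T) * hermiteH (n + 1) (v / Real.sqrt T)))) v := by
  have hs0 : 0 < Real.sqrt T := Real.sqrt_pos.2 hT
  have hs : Real.sqrt T ≠ 0 := ne_of_gt hs0
  have hss : Real.sqrt T * Real.sqrt T = T := Real.mul_self_sqrt hT.le
  have he : HasDerivAt (fun w : ℝ => Real.exp (-(2 / T) * w ^ 2))
      (Real.exp (-(2 / T) * v ^ 2) * (-(2 / T) * (2 * v))) v := by
    have h1 : HasDerivAt (fun w : ℝ => -(2 / T) * w ^ 2) (-(2 / T) * (2 * v)) v := by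
      simpa [mul_comm] using (hasDerivAt_pow 2 v).const_mul (-(2 / T))
    exact h1.exp
  have hu : HasDerivAt (fun w : ℝ => w / Real.sqrt T) ((Real.sqrt T)⁻¹) v := by
    simpa [one_div] using (hasDerivAt_id v).div_const (Real.sqrt T)
  have hm := (hermiteH_hasDerivAt m (v / Real.sqrt T)).comp v hu
  have hn := (hermiteH_hasDerivAt n (v / Real.sqrt T)).comp v hu
  have key := he.mul (hm.mul hn)
  refine key.congr_deriv ?_
  symm
  simp only [Function.comp, Pi.mul_apply]
  rw [hermiteH_succ m, hermiteH_succ n]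
  have h4 : (Real.sqrt T)⁻¹ * (Real.sqrt T)⁻¹ = T⁻¹ := by rw [← mul_inv, hss]
  linear_combination (-4 * v * Real.exp (-(2 / T) * v ^ 2) * hermiteH m (v / Real.sqrt T) *
    hermiteH n (v / Real.sqrt T)) * h4

lemma integral_sum_zero (hT : 0 < T) (m n : ℕ) :
    (∫ v : ℝ, Real.exp (-(2 / T) * v ^ 2) *
        (hermiteH (m + 1) (v / Real.sqrt T) * hermiteH n (v / Real.sqrt T))) +
      (∫ v : ℝ, Real.exp (-(2 / T) * v ^ 2) *
        (hermiteH m (v / Real.sqrt T) * hermiteH (n + 1) (v / Real.sqrt T))) = 0 := by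
  have hs0 : 0 < Real.sqrt T := Real.sqrt_pos.2 hT
  have hs : Real.sqrt T ≠ 0 := ne_of_gt hs0
  set φ : ℝ → ℝ := fun v =>
    -(Real.sqrt T)⁻¹ * (Real.exp (-(2 / T) * v ^ 2) *
      (hermiteH (m + 1) (v / Real.sqrt T) * hermiteH n (v / Real.sqrt T) +
        hermiteH m (v / Real.sqrt T) * hermiteH (n + 1) (v / Real.sqrt T))) with hφ
  have hint1 := F_integrable hT (m + 1) n
  have hint2 := F_integrable hT m (n + 1)
  have hintsum : Integrable fun v : ℝ => Real.exp (-(2 / T) * v ^ 2) *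
      (hermiteH (m + 1) (v / Real.sqrt T) * hermiteH n (v / Real.sqrt T) +
        hermiteH m (v / Real.sqrt T) * hermiteH (n + 1) (v / Real.sqrt T)) :=
    (hint1.add hint2).congr (Filter.Eventually.of_forall fun v => by simp [mul_add])
  have hφint : Integrable φ := hintsum.const_mul _
  have h1 : ∫ v in Set.Iic (0:ℝ), φ v =
      (fun v : ℝ => Real.exp (-(2 / T) * v ^ 2) *
        (hermiteH m (v / Real.sqrt T) * hermiteH n (v / Real.sqrt T))) 0 - 0 :=
    integral_Iic_of_hasDerivAt_of_tendsto' (fun x _ => F_hasDerivAt hT m n x)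
      hφint.integrableOn (F_tendsto_atBot hT m n)
  have h2 : ∫ v in Set.Ioi (0:ℝ), φ v =
      0 - (fun v : ℝ => Real.exp (-(2 / T) * v ^ 2) *
        (hermiteH m (v / Real.sqrt T) * hermiteH n (v / Real.sqrt T))) 0 :=
    integral_Ioi_of_hasDerivAt_of_tendsto' (fun x _ => F_hasDerivAt hT m n x)
      hφint.integrableOn (F_tendsto_atTop hT m n)
  have hφ0 : ∫ v : ℝ, φ v = 0 := by
    rw [← intervalIntegral.integral_Iic_add_Ioi (b := (0:ℝ)) hφint.integrableOn hφint.integrableOn, h1, h2]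
    ring
  have hsum0 : ∫ v : ℝ, Real.exp (-(2 / T) * v ^ 2) *
      (hermiteH (m + 1) (v / Real.sqrt T) * hermiteH n (v / Real.sqrt T) +
        hermiteH m (v / Real.sqrt T) * hermiteH (n + 1) (v / Real.sqrt T)) = 0 := by
    have : ∫ v : ℝ, (-(Real.sqrt T)) * φ v = -(Real.sqrt T) * ∫ v : ℝ, φ v :=
      integral_const_mul _ _
    rw [hφ0, mul_zero] at this
    rw [← this]
    congr 1
    funext v
    rw [hφ]
    field_simp
  simp_rw [mul_add] at hsum0
  rw [integral_add hint1 hint2] at hsum0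
  exact hsum0


noncomputable def cst (m : ℕ) : ℝ :=
  ((2 : ℝ) ^ m * (Nat.factorial m : ℝ) * Real.sqrt π) ^ (-(1 : ℝ) / 2)

lemma gramA_eq_s11 (hT : 0 < T) (m n : ℕ) : gramA T m n =
    (T ^ (-(1 : ℝ) / 2) * T ^ (-(1 : ℝ) / 2) * (cst m * cst n)) *
      ∫ v : ℝ, Real.exp (-(2 / T) * v ^ 2) *
        (hermiteH m (v / Real.sqrt T) * hermiteH n (v / Real.sqrt T)) := by
  rw [gramA, ← integral_const_mul]
  congr 1
  funext v
  rw [psi, psi, cst, cst,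
    show -(2 / T) * v ^ 2 = (-v ^ 2 / T) + (-v ^ 2 / T) by ring, Real.exp_add]
  ring

lemma cst_succ (n : ℕ) : cst (n + 1) = ((2 : ℝ) * ((n : ℝ) + 1)) ^ (-(1 : ℝ) / 2) * cst n := by
  rw [cst, cst, ← Real.mul_rpow (by positivity) (by positivity)]
  congr 1
  push_cast [Nat.factorial_succ, pow_succ]
  ring

lemma sqrt_mul_cst (hT : 0 < T) (n : ℕ) :
    Real.sqrt (2 * ((n : ℝ) + 1) / T) * cst (n + 1) = (Real.sqrt T)⁻¹ * cst n := by
  have hx : (0 : ℝ) < 2 * ((n : ℝ) + 1) := by positivity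
  rw [cst_succ, Real.sqrt_div hx.le, Real.sqrt_eq_rpow, div_eq_mul_inv]
  have h1 : (2 * ((n : ℝ) + 1)) ^ ((1 : ℝ) / 2) * (2 * ((n : ℝ) + 1)) ^ (-(1 : ℝ) / 2) = 1 := by
    rw [← Real.rpow_add hx]
    norm_num
  calc (2 * ((n : ℝ) + 1)) ^ ((1:ℝ)/2) * (Real.sqrt T)⁻¹ *
        ((2 * ((n : ℝ) + 1)) ^ (-(1:ℝ)/2) * cst n)
      = ((2 * ((n : ℝ) + 1)) ^ ((1:ℝ)/2) * (2 * ((n : ℝ) + 1)) ^ (-(1:ℝ)/2)) *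
        ((Real.sqrt T)⁻¹ * cst n) := by ring
    _ = (Real.sqrt T)⁻¹ * cst n := by rw [h1, one_mul]

lemma gramA_symm (m n : ℕ) : gramA T m n = gramA T n m := by
  rw [gramA, gramA]
  congr 1
  funext v
  ring

lemma gram_key (hT : 0 < T) (m n : ℕ) :
    Real.sqrt (2 * ((n : ℝ) + 1) / T) * gramA T m (n + 1) +
      Real.sqrt (2 * ((m : ℝ) + 1) / T) * gramA T (m + 1) n = 0 := by
  rw [gramA_eq_s11 hT m (n + 1), gramA_eq_s11 hT (m + 1) n]
  set I1 := ∫ v : ℝ, Real.exp (-(2 / T) * v ^ 2) *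
    (hermiteH m (v / Real.sqrt T) * hermiteH (n + 1) (v / Real.sqrt T)) with hI1
  set I2 := ∫ v : ℝ, Real.exp (-(2 / T) * v ^ 2) *
    (hermiteH (m + 1) (v / Real.sqrt T) * hermiteH n (v / Real.sqrt T)) with hI2
  have h1 := sqrt_mul_cst hT n
  have h2 := sqrt_mul_cst hT m
  have h3 : I2 + I1 = 0 := integral_sum_zero hT m n
  linear_combination (T ^ (-(1:ℝ)/2) * T ^ (-(1:ℝ)/2) * cst m * I1) * h1 +
    (T ^ (-(1:ℝ)/2) * T ^ (-(1:ℝ)/2) * cst n * I2) * h2 +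
    (T ^ (-(1:ℝ)/2) * T ^ (-(1:ℝ)/2) * (Real.sqrt T)⁻¹ * cst m * cst n) * h3

end Core

theorem modified_matrix_skew (T : ℝ) (hT : 0 < T) (N : ℕ) (e : ℝ)
    (M : Matrix (Fin (N + 1)) (Fin (N + 1)) ℝ)
    (hM : ∀ m n : Fin (N + 1),
      M m n = if (n : ℕ) = N then
          (Amat T N * Dmat T e N) m n -
            e * Real.sqrt (2 * ((N : ℝ) + 1) / T) * gramA T (m : ℕ) (N + 1)
        else (Amat T N * Dmat T e N) m n) :
    M + Mᵀ = 0 := by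
  have hAD : ∀ a b : Fin (N + 1), (Amat T N * Dmat T e N) a b =
      if (b : ℕ) = N then 0
      else -e * Real.sqrt (2 * (((b : ℕ) : ℝ) + 1) / T) * gramA T (a : ℕ) ((b : ℕ) + 1) := by
    intro a b
    rw [Matrix.mul_apply]
    by_cases hb : (b : ℕ) = N
    · rw [if_pos hb]
      apply Finset.sum_eq_zero
      intro k _
      have hk := k.isLt
      have : ¬((b : ℕ) + 1 = (k : ℕ)) := by omega
      simp [Dmat, this]
    · rw [if_neg hb]
      have hblt : (b : ℕ) < N := lt_of_le_of_ne (Nat.lt_succ_iff.mp b.isLt) hb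
      set k₀ : Fin (N + 1) := ⟨(b : ℕ) + 1, by omega⟩ with hk₀
      rw [Finset.sum_eq_single k₀]
      · have hco : ((k₀ : ℕ) : ℝ) = ((b : ℕ) : ℝ) + 1 := by
          rw [hk₀]; push_cast; ring
        simp only [Amat, Dmat, hk₀]
        simp only [if_true]
        push_cast
        ring
      · intro k _ hk
        have : ¬((b : ℕ) + 1 = (k : ℕ)) := by
          intro h
          exact hk (Fin.ext h.symm)
        simp [Dmat, this]
      · intro h
        exact absurd (Finset.mem_univ k₀) h
  have hMval : ∀ a b : Fin (N + 1),
      M a b = -(e * Real.sqrt (2 * (((b : ℕ) : ℝ) + 1) / T) * gramA T (a : ℕ) ((b : ℕ) + 1)) := by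
    intro a b
    rw [hM, hAD]
    by_cases hb : (b : ℕ) = N
    · rw [if_pos hb, if_pos hb, hb]
      push_cast
      ring
    · rw [if_neg hb, if_neg hb]
      ring
  ext i j
  simp only [Matrix.add_apply, Matrix.transpose_apply, Matrix.zero_apply]
  rw [hMval i j, hMval j i, gramA_symm (T := T) (j : ℕ) ((i : ℕ) + 1)]
  linear_combination (-e) * gram_key hT (i : ℕ) (j : ℕ)
end
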